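/- Let p be a prime and σ a non-negative integer, and let I and J be finite subsets of {i ∈ ℕ : σ_i ≠ 0}. Then σ_I ≤ σ_J if and only if max(I \ J) ≤ max(J \ I), where for a finite set A of non-negative integers max(A) denotes its maximum in ℕ ∪ {⊥} with the convention max(∅) = ⊥ (and ⊥ is below every natural number). -/
import Mathlib


/-- The `i`-th digit of the base-`p` expansion of `n`. -/
def digit (p n i : ℕ) : ℕ := n / p ^ i % p

/-- `σ_I = ∑_{i ∈ I} p^i σ_i`. -/
def digitSum (p σ : ℕ) (I : Finset ℕ) : ℕ := ∑ i ∈ I, p ^ i * digit p σ i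

/-- An admissible triple `(N, σ, δ)`. -/
def AdmissibleTriple (p N σ δ : ℕ) : Prop :=
  σ < p ^ (N + 1) - p ^ N ∧ δ < p ^ (N + 1) - p ^ N ∧
  (∀ i < N, digit p σ i + digit p δ i ≤ p - 1) ∧
  digit p σ N + digit p δ N < p - 1

/-- An admissible quadruple `(N, σ, δ, I)`. -/
def AdmissibleQuadruple (p N σ δ : ℕ) (I : Finset ℕ) : Prop :=
  AdmissibleTriple p N σ δ ∧ ∀ i ∈ I, digit p σ i ≠ 0 ∧ i ≠ N

/-- An admissible quadruple for the pair `(r, t)`. -/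
def AdmissibleQuadrupleFor (p r t N σ δ : ℕ) (I : Finset ℕ) : Prop :=
  AdmissibleQuadruple p N σ δ I ∧
  t + 2 * digitSum p σ I = p ^ N - 1 + σ ∧
  r ≡ p ^ N - 1 + σ + 2 * δ [MOD 2 * p ^ (N + 1)]

lemma geom_aux (p m : ℕ) (hp : 1 ≤ p) :
    ∑ i ∈ Finset.range m, p ^ i * (p - 1) = p ^ m - 1 := by
  induction m with
  | zero => simp
  | succ m ih =>
    rw [Finset.sum_range_succ, ih]
    obtain ⟨q, rfl⟩ : ∃ q, p = q + 1 := ⟨p - 1, by omega⟩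
    have h1 : 1 ≤ (q + 1) ^ m := Nat.one_le_pow _ _ (by omega)
    have h2 : (q + 1) ^ (m + 1) = (q + 1) ^ m * q + (q + 1) ^ m := by ring
    simp only [Nat.add_sub_cancel]
    omega

lemma digitSum_le_aux (p σ : ℕ) (hp : 1 ≤ p) (A : Finset ℕ) (m : ℕ)
    (hA : ∀ a ∈ A, a < m) : digitSum p σ A ≤ p ^ m - 1 := by
  calc digitSum p σ A ≤ ∑ i ∈ A, p ^ i * (p - 1) := by
        refine Finset.sum_le_sum fun i _ => Nat.mul_le_mul_left _ ?_
        have := Nat.mod_lt (σ / p ^ i) (show 0 < p by omega)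
        unfold digit; omega
    _ ≤ ∑ i ∈ Finset.range m, p ^ i * (p - 1) :=
        Finset.sum_le_sum_of_subset (fun a ha => Finset.mem_range.mpr (hA a ha))
    _ = p ^ m - 1 := geom_aux p m hp

lemma le_digitSum_aux (p σ : ℕ) (B : Finset ℕ) (m : ℕ) (hm : m ∈ B)
    (hd : digit p σ m ≠ 0) : p ^ m ≤ digitSum p σ B :=
  calc p ^ m ≤ p ^ m * digit p σ m :=
        Nat.le_mul_of_pos_right _ (Nat.pos_of_ne_zero hd)
    _ ≤ digitSum p σ B := by
        unfold digitSum
        exact Finset.single_le_sum (f := fun i => p ^ i * digit p σ i) (fun i _ => Nat.zero_le _) hm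

theorem stmt_5 (p : ℕ) (hp : p.Prime) (σ : ℕ) (I J : Finset ℕ)
    (hI : ∀ i ∈ I, digit p σ i ≠ 0) (hJ : ∀ i ∈ J, digit p σ i ≠ 0) :
    digitSum p σ I ≤ digitSum p σ J ↔ (I \ J).max ≤ (J \ I).max := by
  have hp1 : 1 ≤ p := hp.one_lt.le.trans' (by omega)
  set A := I \ J with hA
  set B := J \ I with hB
  have hsplitI : digitSum p σ A + digitSum p σ (I ∩ J) = digitSum p σ I := by
    unfold digitSum
    rw [← Finset.sum_union (Finset.disjoint_sdiff_inter I J), Finset.sdiff_union_inter]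
  have hsplitJ : digitSum p σ B + digitSum p σ (I ∩ J) = digitSum p σ J := by
    unfold digitSum
    rw [Finset.inter_comm, ← Finset.sum_union (Finset.disjoint_sdiff_inter J I),
      Finset.sdiff_union_inter]
  have key : digitSum p σ A ≤ digitSum p σ B ↔ A.max ≤ B.max := by
    constructor
    · intro h
      by_contra hlt
      push_neg at hlt
      have hAne : A.Nonempty := by
        rw [Finset.nonempty_iff_ne_empty]
        intro he
        rw [he, Finset.max_empty] at hlt
        exact not_lt_bot hlt
      set m := A.max' hAne with hm
      have hmax : A.max = (m : WithBot ℕ) := (A.coe_max' hAne).symm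
      have hmA : m ∈ A := A.max'_mem hAne
      have hdig : digit p σ m ≠ 0 := hI m (Finset.mem_sdiff.mp hmA).1
      have hlow : p ^ m ≤ digitSum p σ A := le_digitSum_aux p σ A m hmA hdig
      have hup : digitSum p σ B ≤ p ^ m - 1 := by
        refine digitSum_le_aux p σ hp1 B m fun b hb => ?_
        have h1 : (b : WithBot ℕ) ≤ B.max := Finset.le_max hb
        have h2 : (b : WithBot ℕ) < (m : WithBot ℕ) := lt_of_le_of_lt h1 (hmax ▸ hlt)
        exact_mod_cast h2
      have hppos : 1 ≤ p ^ m := Nat.one_le_pow _ _ (by omega)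
      omega
    · intro h
      rcases eq_or_ne B.max ⊥ with hbot | hne
      · have hAbot : A.max = ⊥ := le_bot_iff.mp (hbot ▸ h)
        have : A = ∅ := Finset.max_eq_bot.mp hAbot
        simp [this, digitSum]
      · have hBne : B.Nonempty := by
          rw [Finset.nonempty_iff_ne_empty]
          intro he
          exact hne (by rw [he, Finset.max_empty])
        set m := B.max' hBne with hm
        have hmax : B.max = (m : WithBot ℕ) := (B.coe_max' hBne).symm
        have hmB : m ∈ B := B.max'_mem hBne
        have hdig : digit p σ m ≠ 0 := hJ m (Finset.mem_sdiff.mp hmB).1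
        have hlow : p ^ m ≤ digitSum p σ B := le_digitSum_aux p σ B m hmB hdig
        have hup : digitSum p σ A ≤ p ^ m - 1 := by
          refine digitSum_le_aux p σ hp1 A m fun a ha => ?_
          have h1 : (a : WithBot ℕ) ≤ A.max := Finset.le_max ha
          have h2 : (a : WithBot ℕ) ≤ (m : WithBot ℕ) := le_trans h1 (hmax ▸ h)
          have h3 : a ≤ m := by exact_mod_cast h2
          have : a ≠ m := by
            rintro rfl
            exact (Finset.mem_sdiff.mp hmB).2 (Finset.mem_sdiff.mp ha).1
          omega
        have hppos : 1 ≤ p ^ m := Nat.one_le_pow _ _ (by omega)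
        omega
  rw [← key]
  omega
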